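/- arXiv:2602.01553 — 3 statements merged into one kernel-verified Lean document; each statement's English description precedes it below -/
import Mathlib

section
/- Let G be a finite simple undirected graph on node set V with neighborhoods N(w) := {x ∈ V : x is adjacent to w}. Let (h_w^{(0)})_{w ∈ V} be random vectors in ℝ^d, each with finite second moments, satisfying E[⟨h_w^{(0)}, h_{w'}^{(0)}⟩] = 1 if w = w' and E[⟨h_w^{(0)}, h_{w'}^{(0)}⟩] = 0 if w ≠ w' (zero-mean, unit-norm-in-expectation, pairwise uncorrelated initial features). Define one layer of sum-aggregation message passing by h_v^{(1)} := Σ_{w ∈ N(v)} h_w^{(0)} for each v ∈ V. Then for every pair of nodes u, v ∈ V, the inner product of the resulting embeddings is an unbiased estimator of their common-neighbor count: E[⟨h_u^{(1)}, h_v^{(1)}⟩] = |N(u) ∩ N(v)|. -/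
open MeasureTheory

/-- One layer of sum-aggregation message passing over random initial node features that
are zero-mean, unit-norm in expectation, and pairwise uncorrelated
(`E[⟨h⁰_w, h⁰_{w'}⟩] = δ_{w w'}`) yields an unbiased estimator of the common-neighbor
count: `E[⟨h¹_u, h¹_v⟩] = |N(u) ∩ N(v)|`, where `h¹_v = ∑_{w ∈ N(v)} h⁰_w`. -/
theorem stmt_7 {V : Type*} [Fintype V] [DecidableEq V]
    (G : SimpleGraph V) [DecidableRel G.Adj]
    {d : ℕ} {Ω : Type*} [MeasurableSpace Ω] (μ : Measure Ω) [IsProbabilityMeasure μ]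
    (h0 : V → Ω → EuclideanSpace ℝ (Fin d))
    (hInt : ∀ w w' : V, Integrable (fun ω => (inner ℝ (h0 w ω) (h0 w' ω) : ℝ)) μ)
    (hOrtho : ∀ w w' : V,
      (∫ ω, (inner ℝ (h0 w ω) (h0 w' ω) : ℝ) ∂μ) = if w = w' then 1 else 0)
    (u v : V) :
    (∫ ω, (inner ℝ (∑ w ∈ G.neighborFinset u, h0 w ω)
        (∑ w ∈ G.neighborFinset v, h0 w ω) : ℝ) ∂μ)
      = ((G.neighborFinset u ∩ G.neighborFinset v).card : ℝ) := by
  have key : (fun ω => (inner ℝ (∑ w ∈ G.neighborFinset u, h0 w ω)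
      (∑ w ∈ G.neighborFinset v, h0 w ω) : ℝ))
      = fun ω => ∑ w ∈ G.neighborFinset u, ∑ w' ∈ G.neighborFinset v,
        (inner ℝ (h0 w ω) (h0 w' ω) : ℝ) := by
    funext ω
    simp only [inner_sum, sum_inner]
    exact Finset.sum_comm
  rw [key, integral_finset_sum _ (fun w _ => integrable_finset_sum _ (fun w' _ => hInt w w'))]
  have : ∀ w ∈ G.neighborFinset u,
      (∫ ω, ∑ w' ∈ G.neighborFinset v, (inner ℝ (h0 w ω) (h0 w' ω) : ℝ) ∂μ)
      = ∑ w' ∈ G.neighborFinset v, if w = w' then (1:ℝ) else 0 := by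
    intro w _
    rw [integral_finset_sum _ (fun w' _ => hInt w w')]
    exact Finset.sum_congr rfl fun w' _ => hOrtho w w'
  rw [Finset.sum_congr rfl this]
  simp only [Finset.sum_ite_eq, Finset.sum_boole]
  rw [← Finset.filter_mem_eq_inter]
end

section
/- Let G be a finite simple undirected graph on node set V with symmetric 0/1 adjacency matrix A and neighborhoods N(w) := {x ∈ V : x is adjacent to w}. Let (h_w^{(0)})_{w ∈ V} be random vectors in ℝ^d, each with finite second moments, satisfying E[⟨h_w^{(0)}, h_{w'}^{(0)}⟩] = 1 if w = w' and 0 otherwise. Define sum-aggregation message passing iteratively by h_v^{(t)} := Σ_{w ∈ N(v)} h_w^{(t-1)} for t ≥ 1. Then for all integers p, q ≥ 0 and all nodes u, v ∈ V, E[⟨h_u^{(p)}, h_v^{(q)}⟩] = Σ_{k ∈ V} (A^p)_{k u} (A^q)_{k v}, where (A^ℓ)_{a b} equals the number of walks of length ℓ between nodes a and b. -/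
open MeasureTheory

lemma stmt_8_expand {V : Type*} [Fintype V] [DecidableEq V]
    (G : SimpleGraph V) [DecidableRel G.Adj]
    {d : ℕ} {Ω : Type*}
    (h : ℕ → V → Ω → EuclideanSpace ℝ (Fin d))
    (hrec : ∀ (t : ℕ) (w : V) (ω : Ω), h (t + 1) w ω = ∑ x ∈ G.neighborFinset w, h t x ω)
    (t : ℕ) (w : V) (ω : Ω) :
    h t w ω = ∑ k : V, ((G.adjMatrix ℝ) ^ t) k w • h 0 k ω := by
  induction t generalizing w with
  | zero => simp [Matrix.one_apply, ite_smul]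
  | succ t ih =>
    rw [hrec]
    simp_rw [ih]
    rw [Finset.sum_comm]
    refine Finset.sum_congr rfl fun k _ => ?_
    rw [← Finset.sum_smul, pow_succ, Matrix.mul_apply]
    congr 1
    simp only [SimpleGraph.adjMatrix_apply, mul_ite, mul_one, mul_zero, ← Finset.sum_filter]
    refine Finset.sum_congr ?_ fun _ _ => rfl
    ext x
    simp [G.adj_comm]

/-- Iterated sum-aggregation message passing `h^{(t)}_v = ∑_{w ∈ N(v)} h^{(t-1)}_w`
over random initial node features with `E[⟨h⁰_w, h⁰_{w'}⟩] = δ_{w w'}` satisfies,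
for all `p, q ≥ 0` and all nodes `u, v`,
`E[⟨h^{(p)}_u, h^{(q)}_v⟩] = ∑_{k ∈ V} (A^p)_{k u} (A^q)_{k v}`,
where `A` is the 0/1 adjacency matrix of the graph. -/
theorem stmt_8 {V : Type*} [Fintype V] [DecidableEq V]
    (G : SimpleGraph V) [DecidableRel G.Adj]
    {d : ℕ} {Ω : Type*} [MeasurableSpace Ω] (μ : Measure Ω) [IsProbabilityMeasure μ]
    (h : ℕ → V → Ω → EuclideanSpace ℝ (Fin d))
    (hInt : ∀ w w' : V, Integrable (fun ω => (inner ℝ (h 0 w ω) (h 0 w' ω) : ℝ)) μ)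
    (hOrtho : ∀ w w' : V,
      (∫ ω, (inner ℝ (h 0 w ω) (h 0 w' ω) : ℝ) ∂μ) = if w = w' then 1 else 0)
    (hrec : ∀ (t : ℕ) (w : V) (ω : Ω), h (t + 1) w ω = ∑ x ∈ G.neighborFinset w, h t x ω)
    (p q : ℕ) (u v : V) :
    (∫ ω, (inner ℝ (h p u ω) (h q v ω) : ℝ) ∂μ)
      = ∑ k : V, ((G.adjMatrix ℝ) ^ p) k u * ((G.adjMatrix ℝ) ^ q) k v := by
  have key : ∀ ω, (inner ℝ (h p u ω) (h q v ω) : ℝ)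
      = ∑ k : V, ∑ j : V, ((G.adjMatrix ℝ) ^ p) k u * ((G.adjMatrix ℝ) ^ q) j v
          * (inner ℝ (h 0 k ω) (h 0 j ω) : ℝ) := by
    intro ω
    rw [stmt_8_expand G h hrec p u ω, stmt_8_expand G h hrec q v ω, sum_inner]
    refine Finset.sum_congr rfl fun k _ => ?_
    rw [inner_sum]
    refine Finset.sum_congr rfl fun j _ => ?_
    rw [real_inner_smul_left, real_inner_smul_right]
    ring
  simp_rw [key]
  rw [integral_finset_sum _ (fun k _ => integrable_finset_sum _ (fun j _ =>
    ((hInt k j).const_mul _)))]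
  simp_rw [integral_finset_sum _ (fun j (_ : j ∈ Finset.univ) => (hInt _ j).const_mul _),
    integral_const_mul, hOrtho]
  simp [Finset.sum_ite_eq, mul_comm]
end

section
/- (Welch bound) Let d ≥ 1 and N > d be integers, and let r_1, ..., r_N be unit-norm vectors in ℝ^d. Then the mutual coherence of the set satisfies max_{1 ≤ i ≠ j ≤ N} |⟨r_i, r_j⟩| ≥ sqrt((N − d) / (d(N − 1))). -/
private lemma sum_swap4 {α β : Type*} [Fintype α] [Fintype β] (f : α → α → β → β → ℝ) :
    ∑ a, ∑ b, ∑ i, ∑ j, f a b i j = ∑ i, ∑ j, ∑ a, ∑ b, f a b i j := by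
  calc ∑ a, ∑ b, ∑ i, ∑ j, f a b i j
      = ∑ a, ∑ i, ∑ b, ∑ j, f a b i j :=
        Finset.sum_congr rfl fun a _ => Finset.sum_comm
    _ = ∑ i, ∑ a, ∑ b, ∑ j, f a b i j := Finset.sum_comm
    _ = ∑ i, ∑ a, ∑ j, ∑ b, f a b i j :=
        Finset.sum_congr rfl fun i _ => Finset.sum_congr rfl fun a _ => Finset.sum_comm
    _ = ∑ i, ∑ j, ∑ a, ∑ b, f a b i j :=
        Finset.sum_congr rfl fun i _ => Finset.sum_comm

/-- Welch bound: for `N > d ≥ 1` unit-norm vectors `r_1, …, r_N` in `ℝ^d`, the mutual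
coherence `max_{i ≠ j} |⟨r_i, r_j⟩|` is at least `√((N − d) / (d (N − 1)))`. -/
theorem stmt_9 {d N : ℕ} (hd : 1 ≤ d) (hdN : d < N)
    (r : Fin N → EuclideanSpace ℝ (Fin d))
    (hunit : ∀ i, ‖r i‖ = 1) :
    ∃ i j : Fin N, i ≠ j ∧
      Real.sqrt (((N : ℝ) - (d : ℝ)) / ((d : ℝ) * ((N : ℝ) - 1)))
        ≤ |(inner ℝ (r i) (r j) : ℝ)| := by
  classical
  have hN2 : 2 ≤ N := lt_of_le_of_lt hd hdN
  set g : Fin N → Fin N → ℝ := fun i j => ∑ a, r i a * r j a with hg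
  have hinner : ∀ i j, (inner ℝ (r i) (r j) : ℝ) = g i j := by
    intro i j
    simp [hg, PiLp.inner_apply, RCLike.inner_apply, conj_trivial, mul_comm]
  have hgii : ∀ i, g i i = 1 := by
    intro i
    have h := real_inner_self_eq_norm_sq (r i)
    rw [hinner] at h
    rw [h, hunit, one_pow]
  set S : Fin d → Fin d → ℝ := fun a b => ∑ i, r i a * r i b with hS
  have htr : ∑ a, S a a = (N : ℝ) := by
    have h1 : ∑ a, S a a = ∑ i, g i i := Finset.sum_comm
    rw [h1]
    simp [hgii]
  have key2 : ∑ a, ∑ b, (S a b) ^ 2 = ∑ i, ∑ j, (g i j) ^ 2 := by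
    have e1 : ∀ a b, (S a b) ^ 2 = ∑ i, ∑ j, (r i a * r i b) * (r j a * r j b) := by
      intro a b; rw [sq, hS]; exact Finset.sum_mul_sum _ _ _ _
    have e2 : ∀ i j, (g i j) ^ 2 = ∑ a, ∑ b, (r i a * r j a) * (r i b * r j b) := by
      intro i j; rw [sq, hg]; exact Finset.sum_mul_sum _ _ _ _
    simp_rw [e1, e2]
    rw [sum_swap4 (fun a b i j => (r i a * r i b) * (r j a * r j b))]
    refine Finset.sum_congr rfl fun i _ => Finset.sum_congr rfl fun j _ =>
      Finset.sum_congr rfl fun a _ => Finset.sum_congr rfl fun b _ => by ring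
  have hCS : ((N : ℝ)) ^ 2 ≤ (d : ℝ) * ∑ i, ∑ j, (g i j) ^ 2 := by
    have h1 : (∑ a, S a a) ^ 2 ≤ (Finset.univ.card : ℝ) * ∑ a, (S a a) ^ 2 :=
      sq_sum_le_card_mul_sum_sq
    have h2 : ∑ a, (S a a) ^ 2 ≤ ∑ a, ∑ b, (S a b) ^ 2 :=
      Finset.sum_le_sum fun a _ =>
        Finset.single_le_sum (fun b _ => sq_nonneg (S a b)) (Finset.mem_univ a)
    rw [htr] at h1
    simp only [Finset.card_univ, Fintype.card_fin] at h1
    calc ((N : ℝ)) ^ 2 ≤ (d : ℝ) * ∑ a, (S a a) ^ 2 := h1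
      _ ≤ (d : ℝ) * ∑ a, ∑ b, (S a b) ^ 2 := by
          exact mul_le_mul_of_nonneg_left h2 (by positivity)
      _ = (d : ℝ) * ∑ i, ∑ j, (g i j) ^ 2 := by rw [key2]
  -- total sum over pairs
  have hT : ∑ i, ∑ j, (g i j) ^ 2 = ∑ p : Fin N × Fin N, (g p.1 p.2) ^ 2 := by
    rw [Fintype.sum_prod_type]
  -- split diagonal
  set s : Finset (Fin N × Fin N) := Finset.univ.offDiag with hs
  have hsfilter : s = Finset.univ.filter (fun p : Fin N × Fin N => p.1 ≠ p.2) := by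
    rw [hs]; ext p; simp [Finset.mem_offDiag]
  have hdiag : ∑ p ∈ Finset.univ.filter (fun p : Fin N × Fin N => ¬ p.1 ≠ p.2),
      (g p.1 p.2) ^ 2 = (N : ℝ) := by
    rw [Finset.sum_filter, Fintype.sum_prod_type]
    simp [hgii]
  have hsplit : ∑ p ∈ s, (g p.1 p.2) ^ 2 = (∑ i, ∑ j, (g i j) ^ 2) - N := by
    rw [hT, ← Finset.sum_filter_add_sum_filter_not Finset.univ
      (fun p : Fin N × Fin N => p.1 ≠ p.2) (fun p => (g p.1 p.2) ^ 2)]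
    rw [hsfilter, hdiag]
    ring
  have hcard : (s.card : ℝ) = (N : ℝ) * (N : ℝ) - (N : ℝ) := by
    rw [hs, Finset.offDiag_card]
    simp only [Finset.card_univ, Fintype.card_fin]
    have : N ≤ N * N := Nat.le_mul_of_pos_left N (by omega)
    push_cast [Nat.cast_sub this]
    ring
  set c : ℝ := ((N : ℝ) - (d : ℝ)) / ((d : ℝ) * ((N : ℝ) - 1)) with hc
  have hD : (0 : ℝ) < (d : ℝ) := by exact_mod_cast hd
  have hn1 : (1 : ℝ) < (N : ℝ) := by exact_mod_cast Nat.lt_of_lt_of_le one_lt_two hN2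
  have hDne : ((d : ℝ)) ≠ 0 := ne_of_gt hD
  have hne1 : ((N : ℝ) - 1) ≠ 0 := by linarith
  have hsum : ∑ p ∈ s, c ≤ ∑ p ∈ s, (g p.1 p.2) ^ 2 := by
    rw [Finset.sum_const, nsmul_eq_mul, hcard, hsplit]
    have h1 : ((N : ℝ)) ^ 2 / (d : ℝ) ≤ ∑ i, ∑ j, (g i j) ^ 2 :=
      (div_le_iff₀' hD).mpr hCS
    have heq : ((N : ℝ) * (N : ℝ) - (N : ℝ)) * c = (N : ℝ) ^ 2 / (d : ℝ) - N := by
      rw [hc]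
      field_simp
    rw [heq]
    linarith
  have hne : s.Nonempty := by
    refine ⟨(⟨0, by omega⟩, ⟨1, by omega⟩), ?_⟩
    rw [Finset.mem_offDiag]
    refine ⟨Finset.mem_univ _, Finset.mem_univ _, ?_⟩
    simp [Fin.ext_iff]
  obtain ⟨p, hp, hle⟩ := Finset.exists_le_of_sum_le hne hsum
  refine ⟨p.1, p.2, ?_, ?_⟩
  · exact (Finset.mem_offDiag.mp hp).2.2
  · rw [hinner]
    calc Real.sqrt c ≤ Real.sqrt ((g p.1 p.2) ^ 2) := Real.sqrt_le_sqrt hle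
      _ = |g p.1 p.2| := Real.sqrt_sq_eq_abs _
end
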